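/- There exist complex roots β₁, β₂, β₃, β₄ of P₃(T) = T⁸ − T⁷ + 2T⁶ − 4T⁵ − 2T⁴ − 12T³ + 18T² − 27T + 81, pairwise distinct and each with strictly positive imaginary part, satisfying the nontrivial multiplicative relation β₁β₃β₄ = −3β₂. -/
import Mathlib


open Polynomial

/-- The Weil polynomial of the Jacobian of `y² = x⁹ + x⁸ + x⁷ + 2x⁵ + x` over `𝔽₃`. -/
noncomputable def P3 : Polynomial ℂ :=
  X ^ 8 - X ^ 7 + 2 * X ^ 6 - 4 * X ^ 5 - 2 * X ^ 4 - 12 * X ^ 3 + 18 * X ^ 2 - 27 * X + 81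

namespace P3aux

open Complex

/-- the auxiliary complex number `i√7` -/
noncomputable def w : ℂ := (Real.sqrt 7 : ℂ) * Complex.I

/-- the quartic factor of P3 over ℚ(i√7), as a function; `qq w` and `qq (-w)` -/
noncomputable def qq (d z : ℂ) : ℂ :=
  z ^ 4 - (1 + d) / 2 * z ^ 3 + d * z ^ 2 + 3 * (1 - d) / 2 * z - 9

/-- candidate root attached to a real root `u` of the real quartic, sign `ε` -/
noncomputable def bet (u v ε : ℝ) : ℂ :=
  ((u / 2 : ℝ) : ℂ) + ((ε * (v / 2) : ℝ) : ℂ) * Complex.I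

lemma bet_im (u v ε : ℝ) : (bet u v ε).im = ε * (v / 2) := by
  simp [bet]

lemma bet_re (u v ε : ℝ) : (bet u v ε).re = u / 2 := by
  simp [bet]

lemma hw_sq : w ^ 2 = -7 := by
  have h7 : ((Real.sqrt 7 : ℝ) : ℂ) ^ 2 = 7 := by
    rw [← Complex.ofReal_pow, Real.sq_sqrt (by norm_num : (0:ℝ) ≤ 7)]
    norm_num
  simp only [w, mul_pow, Complex.I_sq, h7]
  ring

/-- the quadratic relation satisfied by `bet u v ε` -/
lemma bet_quad (u v ε : ℝ) (hv : v ^ 2 = 12 - u ^ 2) (hε : ε ^ 2 = 1) :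
    (bet u v ε) ^ 2 = (u : ℂ) * bet u v ε - 3 := by
  have hv' : ((v : ℂ)) ^ 2 = 12 - ((u : ℂ)) ^ 2 := by exact_mod_cast congrArg (fun x : ℝ => (x : ℂ)) hv
  have hε' : ((ε : ℂ)) ^ 2 = 1 := by exact_mod_cast congrArg (fun x : ℝ => (x : ℂ)) hε
  have hI := Complex.I_sq
  simp only [bet]
  push_cast
  linear_combination ((ε:ℂ)^2 * (v:ℂ)^2 / 4) * hI - ((v:ℂ)^2 / 4) * hε' - (1/4) * hv'

/-- roots of the real quartic give roots of P3 -/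
lemma eval_P3 (z : ℂ) (u : ℝ) (hz : z ^ 2 = (u : ℂ) * z - 3)
    (hu : u ^ 4 - u ^ 3 - 10 * u ^ 2 + 5 * u + 4 = 0) : P3.eval z = 0 := by
  have hu' : (u : ℂ) ^ 4 - (u:ℂ) ^ 3 - 10 * (u:ℂ) ^ 2 + 5 * (u:ℂ) + 4 = 0 := by
    exact_mod_cast congrArg (fun x : ℝ => (x : ℂ)) hu
  have halg : z ^ 8 - z ^ 7 + 2 * z ^ 6 - 4 * z ^ 5 - 2 * z ^ 4 - 12 * z ^ 3 + 18 * z ^ 2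
      - 27 * z + 81 = 0 := by
    linear_combination (z^6 + ((u:ℂ)-1)*z^5 + ((u:ℂ)^2-(u:ℂ)-1)*z^4
      + ((u:ℂ)^3-(u:ℂ)^2-4*(u:ℂ)-1)*z^3 + (3*(u:ℂ)^2-3*(u:ℂ)-3)*z^2
      + (9*(u:ℂ)-9)*z + 27) * hz + z^4 * hu'
  simp only [P3, eval_add, eval_sub, eval_mul, eval_pow, eval_X, eval_ofNat]
  linear_combination halg

lemma halg_of (z : ℂ) (u : ℝ) (hz : z ^ 2 = (u : ℂ) * z - 3)
    (hu : u ^ 4 - u ^ 3 - 10 * u ^ 2 + 5 * u + 4 = 0) :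
    z ^ 8 - z ^ 7 + 2 * z ^ 6 - 4 * z ^ 5 - 2 * z ^ 4 - 12 * z ^ 3 + 18 * z ^ 2
      - 27 * z + 81 = 0 := by
  have hu' : (u : ℂ) ^ 4 - (u:ℂ) ^ 3 - 10 * (u:ℂ) ^ 2 + 5 * (u:ℂ) + 4 = 0 := by
    exact_mod_cast congrArg (fun x : ℝ => (x : ℂ)) hu
  linear_combination (z^6 + ((u:ℂ)-1)*z^5 + ((u:ℂ)^2-(u:ℂ)-1)*z^4
    + ((u:ℂ)^3-(u:ℂ)^2-4*(u:ℂ)-1)*z^3 + (3*(u:ℂ)^2-3*(u:ℂ)-3)*z^2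
    + (9*(u:ℂ)-9)*z + 27) * hz + z^4 * hu'

/-- key lemma: under a sign condition, `bet u v ε` is a root of `qq w` -/
lemma qq_w_root (u v ε : ℝ) (hu : u ^ 4 - u ^ 3 - 10 * u ^ 2 + 5 * u + 4 = 0)
    (hv : v ^ 2 = 12 - u ^ 2) (hε : ε ^ 2 = 1)
    (hT : u * (u - 1/2) * ε * v / 2 + Real.sqrt 7 * ((u - 2) * u) / 4 ≠ 0) :
    qq w (bet u v ε) = 0 := by
  set z := bet u v ε with hzdef
  have hz : z ^ 2 = (u : ℂ) * z - 3 := bet_quad u v ε hv hε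
  have hz0 : z ≠ 0 := by
    intro h0
    rw [h0] at hz
    norm_num at hz
  have halg := halg_of z u hz hu
  have hd : (-w) ^ 2 = -7 := by rw [neg_pow]; simpa using hw_sq
  -- product of the two quartic factors vanishes at z
  have hprod : qq w z * qq (-w) z = 0 := by
    simp only [qq]
    linear_combination halg - (-z^3/2 + z^2 - 3*z/2)^2 * hw_sq
  -- reduction of qq (-w) z to linear form
  have hred : qq (-w) z =
      z * ((((u:ℂ)^2 - (u:ℂ)/2 + w * ((u:ℂ) - 2) / 2)) * z - (6 * (u:ℂ) - 3)) := by
    simp only [qq]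
    linear_combination (z^2 + ((u:ℂ) - 1/2 + w/2) * z - 3) * hz
  -- the bracket has nonzero imaginary part
  set T : ℝ := u * (u - 1/2) * ε * v / 2 + Real.sqrt 7 * ((u - 2) * u) / 4 with hTdef
  set A : ℝ := (u^2 - u/2) * (u/2) - (6*u - 3) - Real.sqrt 7 * (u - 2) * (ε * (v/2)) / 2
    with hAdef
  have hBeq : (((u:ℂ)^2 - (u:ℂ)/2 + w * ((u:ℂ) - 2) / 2)) * z - (6 * (u:ℂ) - 3)
      = ((A : ℝ) : ℂ) + ((T : ℝ) : ℂ) * Complex.I := by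
    simp only [hzdef, bet, w, hTdef, hAdef]
    push_cast
    linear_combination (((Real.sqrt 7 : ℝ):ℂ) * ((u:ℂ) - 2) * ((ε:ℂ) * ((v:ℂ)/2)) / 2) *
      Complex.I_sq
  have hBne : (((u:ℂ)^2 - (u:ℂ)/2 + w * ((u:ℂ) - 2) / 2)) * z - (6 * (u:ℂ) - 3) ≠ 0 := by
    rw [hBeq]
    intro h0
    have him := congrArg Complex.im h0
    simp at him
    exact hT him
  have hne : qq (-w) z ≠ 0 := by
    rw [hred]
    exact mul_ne_zero hz0 hBne
  rcases mul_eq_zero.1 hprod with h | h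
  · exact h
  · exact absurd h hne

/-- product of four distinct roots of the quartic `qq d` -/
lemma prod_four (d r₁ r₂ r₃ r₄ : ℂ)
    (h1 : qq d r₁ = 0) (h2 : qq d r₂ = 0) (h3 : qq d r₃ = 0) (h4 : qq d r₄ = 0)
    (h21 : r₂ ≠ r₁) (h31 : r₃ ≠ r₁) (h32 : r₃ ≠ r₂)
    (h41 : r₄ ≠ r₁) (h42 : r₄ ≠ r₂) (h43 : r₄ ≠ r₃) :
    r₁ * r₂ * r₃ * r₄ = -9 := by
  simp only [qq] at h1 h2 h3 h4
  set a₃ : ℂ := -(1 + d)/2 with ha₃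
  set a₂ : ℂ := d with ha₂
  set a₁ : ℂ := 3 * (1 - d)/2 with ha₁
  -- cubic after dividing by (z - r₁)
  set b₂ : ℂ := r₁ + a₃ with hb₂
  set b₁ : ℂ := r₁^2 + a₃*r₁ + a₂ with hb₁
  set b₀ : ℂ := r₁^3 + a₃*r₁^2 + a₂*r₁ + a₁ with hb₀
  have f1 : ∀ z : ℂ, z ^ 4 - (1 + d) / 2 * z ^ 3 + d * z ^ 2 + 3 * (1 - d) / 2 * z - 9
      = (z - r₁) * (z^3 + b₂*z^2 + b₁*z + b₀) := by
    intro z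
    simp only [hb₂, hb₁, hb₀, ha₃, ha₂, ha₁]
    linear_combination h1
  have g2 : r₂^3 + b₂*r₂^2 + b₁*r₂ + b₀ = 0 := by
    have := (f1 r₂).symm.trans h2
    exact (mul_eq_zero.1 this).resolve_left (sub_ne_zero.2 h21)
  set c₁ : ℂ := r₂ + b₂ with hc₁
  set c₀ : ℂ := r₂^2 + b₂*r₂ + b₁ with hc₀
  have f2 : ∀ z : ℂ, z^3 + b₂*z^2 + b₁*z + b₀ = (z - r₂) * (z^2 + c₁*z + c₀) := by
    intro z
    simp only [hc₁, hc₀]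
    linear_combination g2
  have g3 : r₃^2 + c₁*r₃ + c₀ = 0 := by
    have h3' : r₃^3 + b₂*r₃^2 + b₁*r₃ + b₀ = 0 := by
      have := (f1 r₃).symm.trans h3
      exact (mul_eq_zero.1 this).resolve_left (sub_ne_zero.2 h31)
    have := (f2 r₃).symm.trans h3'
    exact (mul_eq_zero.1 this).resolve_left (sub_ne_zero.2 h32)
  set e₀ : ℂ := r₃ + c₁ with he₀
  have f3 : ∀ z : ℂ, z^2 + c₁*z + c₀ = (z - r₃) * (z + e₀) := by
    intro z
    simp only [he₀]
    linear_combination g3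
  have g4 : r₄ + e₀ = 0 := by
    have h4' : r₄^3 + b₂*r₄^2 + b₁*r₄ + b₀ = 0 := by
      have := (f1 r₄).symm.trans h4
      exact (mul_eq_zero.1 this).resolve_left (sub_ne_zero.2 h41)
    have h4'' : r₄^2 + c₁*r₄ + c₀ = 0 := by
      have := (f2 r₄).symm.trans h4'
      exact (mul_eq_zero.1 this).resolve_left (sub_ne_zero.2 h42)
    have := (f3 r₄).symm.trans h4''
    exact (mul_eq_zero.1 this).resolve_left (sub_ne_zero.2 h43)
  have he₀' : e₀ = -r₄ := by linear_combination g4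
  have hzero := f1 0
  rw [f2 0, f3 0, he₀'] at hzero
  have : (-9 : ℂ) = (-r₁) * ((-r₂) * ((-r₃) * (0 + -r₄))) := by
    linear_combination hzero
  linear_combination -this

end P3aux


set_option maxHeartbeats 2000000 in
open P3aux Complex in
/-- There are pairwise distinct complex roots `β₁, β₂, β₃, β₄` of `P₃`, each with strictly
positive imaginary part, satisfying the nontrivial relation `β₁β₃β₄ = −3β₂`. -/
theorem P3_nontrivial_relation :
    ∃ β₁ β₂ β₃ β₄ : ℂ,
      P3.eval β₁ = 0 ∧ P3.eval β₂ = 0 ∧ P3.eval β₃ = 0 ∧ P3.eval β₄ = 0 ∧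
      β₁ ≠ β₂ ∧ β₁ ≠ β₃ ∧ β₁ ≠ β₄ ∧ β₂ ≠ β₃ ∧ β₂ ≠ β₄ ∧ β₃ ≠ β₄ ∧
      0 < β₁.im ∧ 0 < β₂.im ∧ 0 < β₃.im ∧ 0 < β₄.im ∧
      β₁ * β₃ * β₄ = -3 * β₂ := by
  have hc : Continuous fun x : ℝ => x^4 - x^3 - 10*x^2 + 5*x + 4 := by fun_prop
  have h7 : (0:ℝ) < Real.sqrt 7 := Real.sqrt_pos.2 (by norm_num)
  -- the four real roots of the trace quartic
  obtain ⟨u₁, hm₁, he₁⟩ := intermediate_value_Icc' (by norm_num : (-3:ℝ) ≤ -2)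
    hc.continuousOn (by norm_num [Set.mem_Icc] :
      (0:ℝ) ∈ Set.Icc ((-2:ℝ)^4 - (-2)^3 - 10*(-2)^2 + 5*(-2) + 4)
        ((-3:ℝ)^4 - (-3)^3 - 10*(-3)^2 + 5*(-3) + 4))
  obtain ⟨u₃, hm₃, he₃⟩ := intermediate_value_Icc (by norm_num : (-1/2:ℝ) ≤ -1/4)
    hc.continuousOn (by norm_num [Set.mem_Icc] :
      (0:ℝ) ∈ Set.Icc ((-1/2:ℝ)^4 - (-1/2)^3 - 10*(-1/2)^2 + 5*(-1/2) + 4)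
        ((-1/4:ℝ)^4 - (-1/4)^3 - 10*(-1/4)^2 + 5*(-1/4) + 4))
  obtain ⟨u₂, hm₂, he₂⟩ := intermediate_value_Icc' (by norm_num : (1/2:ℝ) ≤ 1)
    hc.continuousOn (by norm_num [Set.mem_Icc] :
      (0:ℝ) ∈ Set.Icc ((1:ℝ)^4 - 1^3 - 10*1^2 + 5*1 + 4)
        ((1/2:ℝ)^4 - (1/2)^3 - 10*(1/2)^2 + 5*(1/2) + 4))
  obtain ⟨u₄, hm₄, he₄⟩ := intermediate_value_Icc (by norm_num : (17/5:ℝ) ≤ 341/100)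
    hc.continuousOn (by norm_num [Set.mem_Icc] :
      (0:ℝ) ∈ Set.Icc ((17/5:ℝ)^4 - (17/5)^3 - 10*(17/5)^2 + 5*(17/5) + 4)
        ((341/100:ℝ)^4 - (341/100)^3 - 10*(341/100)^2 + 5*(341/100) + 4))
  have hu₁ : u₁^4 - u₁^3 - 10*u₁^2 + 5*u₁ + 4 = 0 := he₁
  have hu₂ : u₂^4 - u₂^3 - 10*u₂^2 + 5*u₂ + 4 = 0 := he₂
  have hu₃ : u₃^4 - u₃^3 - 10*u₃^2 + 5*u₃ + 4 = 0 := he₃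
  have hu₄ : u₄^4 - u₄^3 - 10*u₄^2 + 5*u₄ + 4 = 0 := he₄
  obtain ⟨hl₁, hr₁⟩ := hm₁
  obtain ⟨hl₂, hr₂⟩ := hm₂
  obtain ⟨hl₃, hr₃⟩ := hm₃
  obtain ⟨hl₄, hr₄⟩ := hm₄
  -- imaginary parts
  set v₁ := Real.sqrt (12 - u₁^2) with hv₁def
  set v₂ := Real.sqrt (12 - u₂^2) with hv₂def
  set v₃ := Real.sqrt (12 - u₃^2) with hv₃def
  set v₄ := Real.sqrt (12 - u₄^2) with hv₄def
  have hv₁ : v₁^2 = 12 - u₁^2 := Real.sq_sqrt (by nlinarith)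
  have hv₂ : v₂^2 = 12 - u₂^2 := Real.sq_sqrt (by nlinarith)
  have hv₃ : v₃^2 = 12 - u₃^2 := Real.sq_sqrt (by nlinarith)
  have hv₄ : v₄^2 = 12 - u₄^2 := Real.sq_sqrt (by nlinarith)
  have hp₁ : 0 < v₁ := Real.sqrt_pos.2 (by nlinarith)
  have hp₂ : 0 < v₂ := Real.sqrt_pos.2 (by nlinarith)
  have hp₃ : 0 < v₃ := Real.sqrt_pos.2 (by nlinarith)
  have hp₄ : 0 < v₄ := Real.sqrt_pos.2 (by nlinarith)
  have hε1 : (1:ℝ)^2 = 1 := by norm_num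
  have hεm : (-1:ℝ)^2 = 1 := by norm_num
  -- the roots of P3
  refine ⟨bet u₁ v₁ 1, bet u₂ v₂ 1, bet u₃ v₃ 1, bet u₄ v₄ 1,
    eval_P3 _ u₁ (bet_quad u₁ v₁ 1 hv₁ hε1) hu₁,
    eval_P3 _ u₂ (bet_quad u₂ v₂ 1 hv₂ hε1) hu₂,
    eval_P3 _ u₃ (bet_quad u₃ v₃ 1 hv₃ hε1) hu₃,
    eval_P3 _ u₄ (bet_quad u₄ v₄ 1 hv₄ hε1) hu₄,
    ?_, ?_, ?_, ?_, ?_, ?_, ?_, ?_, ?_, ?_, ?_⟩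
  · intro h; have := congrArg Complex.re h; rw [bet_re, bet_re] at this; linarith
  · intro h; have := congrArg Complex.re h; rw [bet_re, bet_re] at this; linarith
  · intro h; have := congrArg Complex.re h; rw [bet_re, bet_re] at this; linarith
  · intro h; have := congrArg Complex.re h; rw [bet_re, bet_re] at this; linarith
  · intro h; have := congrArg Complex.re h; rw [bet_re, bet_re] at this; linarith
  · intro h; have := congrArg Complex.re h; rw [bet_re, bet_re] at this; linarith
  · rw [bet_im]; nlinarith
  · rw [bet_im]; nlinarith
  · rw [bet_im]; nlinarith
  · rw [bet_im]; nlinarith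
  -- the multiplicative relation
  · set γ₂ := bet u₂ v₂ (-1) with hγdef
    have hq₁ : qq w (bet u₁ v₁ 1) = 0 := by
      refine qq_w_root u₁ v₁ 1 hu₁ hv₁ hε1 (ne_of_gt ?_)
      have t1 : 0 < u₁*(u₁-1/2)*1*v₁ := by nlinarith
      have t2 : 0 < Real.sqrt 7 * ((u₁-2)*u₁) := mul_pos h7 (by nlinarith)
      linarith
    have hq₃ : qq w (bet u₃ v₃ 1) = 0 := by
      refine qq_w_root u₃ v₃ 1 hu₃ hv₃ hε1 (ne_of_gt ?_)
      have t1 : 0 < u₃*(u₃-1/2)*1*v₃ := by nlinarith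
      have t2 : 0 < Real.sqrt 7 * ((u₃-2)*u₃) := mul_pos h7 (by nlinarith)
      linarith
    have hq₄ : qq w (bet u₄ v₄ 1) = 0 := by
      refine qq_w_root u₄ v₄ 1 hu₄ hv₄ hε1 (ne_of_gt ?_)
      have t1 : 0 < u₄*(u₄-1/2)*1*v₄ := by nlinarith
      have t2 : 0 < Real.sqrt 7 * ((u₄-2)*u₄) := mul_pos h7 (by nlinarith)
      linarith
    have hqγ : qq w γ₂ = 0 := by
      refine qq_w_root u₂ v₂ (-1) hu₂ hv₂ hεm (ne_of_lt ?_)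
      have t1 : 0 ≤ u₂*(u₂-1/2)*v₂ := mul_nonneg (by nlinarith) hp₂.le
      have t2 : Real.sqrt 7 * ((u₂-2)*u₂) < 0 := mul_neg_of_pos_of_neg h7 (by nlinarith)
      have t3 : u₂*(u₂-1/2)*(-1)*v₂ = -(u₂*(u₂-1/2)*v₂) := by ring
      rw [t3]; linarith
    have hprod : bet u₁ v₁ 1 * bet u₃ v₃ 1 * bet u₄ v₄ 1 * γ₂ = -9 := by
      refine prod_four w _ _ _ _ hq₁ hq₃ hq₄ hqγ ?_ ?_ ?_ ?_ ?_ ?_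
      all_goals intro h; have := congrArg Complex.re h; rw [bet_re, bet_re] at this; linarith
    have hv₂' : ((v₂:ℝ):ℂ)^2 = 12 - ((u₂:ℝ):ℂ)^2 := by
      exact_mod_cast congrArg (fun x : ℝ => (x:ℂ)) hv₂
    have hγβ : γ₂ * bet u₂ v₂ 1 = 3 := by
      simp only [hγdef, bet]
      push_cast
      linear_combination (-((v₂:ℂ)^2)/4) * Complex.I_sq + (1/4) * hv₂'
    have hγ0 : γ₂ ≠ 0 := by
      intro h; rw [h, zero_mul] at hγβ; norm_num at hγβ
    have key : bet u₁ v₁ 1 * bet u₃ v₃ 1 * bet u₄ v₄ 1 * γ₂ = (-3 * bet u₂ v₂ 1) * γ₂ := by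
      linear_combination hprod + 3 * hγβ
    exact mul_right_cancel₀ hγ0 key
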